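/- Let (V_N) be a nondecreasing positive sequence that is slowly varying in the sense of Karamata and diverges to infinity. Then ∑_{j=1}^∞ (1/j²)·(V_{jN} − V_N) = o(V_N) as N → ∞. -/

import Mathlib

open Filter

/-- If `V` is a nondecreasing positive slowly varying (Karamata) sequence diverging to
infinity, then `∑_{j≥1} (1/j²)·(V_{jN} − V_N) = o(V_N)` as `N → ∞`. -/
theorem karamata_tail_series_isLittleO
    (V : ℕ → ℝ) (hpos : ∀ N, 0 < V N) (hmono : Monotone V)
    (hslow : ∀ l : ℝ, 0 < l →
      Tendsto (fun N : ℕ => V ⌊l * N⌋₊ / V N) atTop (nhds 1))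
    (hdiv : Tendsto V atTop atTop) :
    (fun N : ℕ => ∑' j : ℕ, (1 / (j : ℝ) ^ 2) * (V (j * N) - V N)) =o[atTop] V := by
  -- doubling bound: eventually V(2N) ≤ (6/5) V N
  have hc : ∀ᶠ N : ℕ in atTop, V (2 * N) ≤ (6/5) * V N := by
    have h2 := hslow 2 (by norm_num)
    have h2' : ∀ᶠ N : ℕ in atTop, V (2 * N) / V N ≤ 6/5 := by
      have := h2.eventually (eventually_le_nhds (by norm_num : (1:ℝ) < 6/5))
      refine this.mono fun N hN => ?_
      have : ⌊(2:ℝ) * (N:ℕ)⌋₊ = 2 * N := by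
        rw [show ((2:ℝ) * (N:ℕ)) = ((2 * N : ℕ) : ℝ) by push_cast; ring, Nat.floor_natCast]
      rwa [this] at hN
    refine h2'.mono fun N hN => ?_
    rwa [div_le_iff₀ (hpos N)] at hN
  obtain ⟨N₀, hN₀⟩ := eventually_atTop.1 hc
  -- growth bound: V (j*N) ≤ (6/5) * √j * V N for N ≥ N₀, j ≥ 1
  have key : ∀ N ≥ N₀, ∀ j : ℕ, 1 ≤ j → V (j * N) ≤ (6/5) * Real.sqrt j * V N := by
    intro N hN j hj
    have hpow : ∀ k : ℕ, V (2 ^ k * N) ≤ (6/5) ^ k * V N := by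
      intro k
      induction k with
      | zero => simp
      | succ k ih =>
        have h1 : V (2 ^ (k+1) * N) ≤ (6/5) * V (2 ^ k * N) := by
          have := hN₀ (2 ^ k * N) (le_trans hN (Nat.le_mul_of_pos_left N (Nat.pow_pos (n := k) (by norm_num))))
          calc V (2 ^ (k+1) * N) = V (2 * (2 ^ k * N)) := by ring_nf
            _ ≤ (6/5) * V (2 ^ k * N) := this
        calc V (2 ^ (k+1) * N) ≤ (6/5) * V (2 ^ k * N) := h1
          _ ≤ (6/5) * ((6/5) ^ k * V N) := by
              have := ih; nlinarith [hpos (2 ^ k * N)]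
          _ = (6/5) ^ (k+1) * V N := by ring
    set L := Nat.log 2 j with hL
    have hjlt : j < 2 ^ (L + 1) := Nat.lt_pow_succ_log_self (by norm_num) j
    have h1 : V (j * N) ≤ V (2 ^ (L + 1) * N) :=
      hmono (Nat.mul_le_mul_right N hjlt.le)
    have h2 : ((6:ℝ)/5) ^ L ≤ Real.sqrt j := by
      rw [show ((6:ℝ)/5) ^ L = Real.sqrt (((6/5)^L)^2) from (Real.sqrt_sq (by positivity)).symm]
      apply Real.sqrt_le_sqrt
      have : (((6:ℝ)/5) ^ L) ^ 2 = ((36:ℝ)/25) ^ L := by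
        rw [← pow_mul, mul_comm, pow_mul]; norm_num
      rw [this]
      calc ((36:ℝ)/25) ^ L ≤ (2:ℝ) ^ L := by
            apply pow_le_pow_left₀ (by norm_num) (by norm_num)
        _ ≤ (j:ℝ) := by
            exact_mod_cast Nat.pow_log_le_self 2 (by omega)
    calc V (j * N) ≤ V (2 ^ (L + 1) * N) := h1
      _ ≤ (6/5) ^ (L + 1) * V N := hpow (L + 1)
      _ = (6/5) * ((6/5) ^ L) * V N := by ring
      _ ≤ (6/5) * Real.sqrt j * V N := by
          have h3 := hpos N
          nlinarith [h2, hpos N, pow_nonneg (by norm_num : (0:ℝ) ≤ 6/5) L]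
  -- ratio tends to 0
  have hmain : Tendsto (fun N : ℕ =>
      (∑' j : ℕ, (1 / (j : ℝ) ^ 2) * (V (j * N) - V N)) / V N) atTop (nhds 0) := by
    have heq : ∀ N : ℕ, (∑' j : ℕ, (1 / (j : ℝ) ^ 2) * (V (j * N) - V N)) / V N
        = ∑' j : ℕ, (1 / (j : ℝ) ^ 2) * (V (j * N) - V N) / V N := fun N => tsum_div_const.symm
    simp only [heq]
    have h0 : (0:ℝ) = ∑' j : ℕ, (0:ℝ) := by simp
    rw [h0]
    apply tendsto_tsum_of_dominated_convergence
      (bound := fun j : ℕ => (6/5) / (j : ℝ) ^ ((3:ℝ)/2))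
    · exact ((Real.summable_one_div_nat_rpow.2 (show (1:ℝ) < 3/2 by norm_num)).mul_left
        (6/5)).congr (fun j => by ring)
    · intro j
      rcases Nat.eq_zero_or_pos j with rfl | hj
      · simpa using tendsto_const_nhds
      · have hj' : (0:ℝ) < j := by exact_mod_cast hj
        have h := hslow j hj'
        have heq2 : (fun N : ℕ => V ⌊(j:ℝ) * N⌋₊ / V N) = fun N : ℕ => V (j * N) / V N := by
          funext N
          rw [show ((j:ℝ) * (N:ℕ)) = ((j * N : ℕ) : ℝ) by push_cast; ring, Nat.floor_natCast]
        rw [heq2] at h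
        have : Tendsto (fun N : ℕ => (1 / (j : ℝ) ^ 2) * (V (j * N) / V N - 1)) atTop (nhds 0) := by
          have := (h.sub (tendsto_const_nhds (x := (1:ℝ)))).const_mul (1 / (j : ℝ) ^ 2)
          simpa using this
        refine this.congr fun N => ?_
        have hVN : V N ≠ 0 := (hpos N).ne'
        have hjne : (j:ℝ) ≠ 0 := hj'.ne'
        field_simp
    · filter_upwards [eventually_ge_atTop N₀] with N hN
      intro j
      rcases Nat.eq_zero_or_pos j with rfl | hj
      · norm_num [Real.zero_rpow]
      · have hVN := hpos N
        have hle : V N ≤ V (j * N) := hmono (Nat.le_mul_of_pos_left N hj)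
        have hnn : 0 ≤ (1 / (j : ℝ) ^ 2) * (V (j * N) - V N) / V N := by
          apply div_nonneg (mul_nonneg (by positivity) (by linarith)) hVN.le
        rw [Real.norm_of_nonneg hnn]
        have hb := key N hN j hj
        have hj1 : (1:ℝ) ≤ j := by exact_mod_cast hj
        have hj0 : (0:ℝ) < j := by exact_mod_cast hj
        have hsq : Real.sqrt j / (j:ℝ)^2 ≤ 1 / (j:ℝ) ^ ((3:ℝ)/2) := by
          rw [Real.sqrt_eq_rpow, div_le_div_iff₀ (pow_pos hj0 2) (Real.rpow_pos_of_pos hj0 _),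
            ← Real.rpow_natCast (j:ℝ) 2, ← Real.rpow_add hj0, one_mul]
          norm_num
        have step1 : (1 / (j : ℝ) ^ 2) * (V (j * N) - V N) / V N
            ≤ (1 / (j : ℝ) ^ 2) * ((6/5) * Real.sqrt j) := by
          rw [div_le_iff₀ hVN]
          have h2 : V (j * N) - V N ≤ (6/5) * Real.sqrt j * V N := by linarith
          have h3 : (0:ℝ) < (j:ℝ)^2 := by positivity
          calc (1 / (j : ℝ) ^ 2) * (V (j * N) - V N)
              ≤ (1 / (j : ℝ) ^ 2) * ((6/5) * Real.sqrt j * V N) := by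
                apply mul_le_mul_of_nonneg_left h2 (by positivity)
            _ = 1 / (j:ℝ)^2 * ((6/5) * Real.sqrt j) * V N := by ring
        calc (1 / (j : ℝ) ^ 2) * (V (j * N) - V N) / V N
            ≤ (1 / (j : ℝ) ^ 2) * ((6/5) * Real.sqrt j) := step1
          _ = (6/5) * (Real.sqrt j / (j:ℝ)^2) := by ring
          _ ≤ (6/5) * (1 / (j:ℝ) ^ ((3:ℝ)/2)) := by
              apply mul_le_mul_of_nonneg_left hsq (by norm_num)
          _ = (6/5) / (j:ℝ) ^ ((3:ℝ)/2) := by ring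
  rw [Asymptotics.isLittleO_iff_tendsto (fun N h => absurd h (hpos N).ne')]
  exact hmain
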